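/- Let $M$ be a set of equivalent probability measures on $(\Omega, \mathcal{F})$ with filtration $\mathcal{F}_n$, consistent with the filtration. For any measures $Q, P \in M$ and the associated measure $R_s^k$ ($k \ge s \ge n$), the identity $E^{R_s^k}\{\xi \mid \mathcal{F}_n\} = E^Q\left\{\xi \frac{E^Q\{\frac{dP}{dQ} \mid \mathcal{F}_k\}}{E^Q\{\frac{dP}{dQ} \mid \mathcal{F}_s\}} \mid \mathcal{F}_n\right\}$ holds almost surely for every nonnegative random variable $\xi$ with $\sup_{P \in M} E^P \xi < \infty$. In particular, $E^Q\{\frac{dR_s^k}{dQ} \mid \mathcal{F}_n\} = 1$ almost surely. -/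

import Mathlib

open MeasureTheory Filter
open scoped ENNReal NNReal

/-- The measure `R_s^k` built from the pair `(Q, P)`: it has density
`E^{Q}[dP/dQ | ℱ k] / E^{Q}[dP/dQ | ℱ s]` with respect to `Q`. -/
noncomputable def Rmeas {Ω : Type*} {m0 : MeasurableSpace Ω} (ℱ : Filtration ℕ m0)
    (Q1 Q2 : Measure Ω) (s k : ℕ) : Measure Ω :=
  Q1.withDensity (fun ω => ENNReal.ofReal
    ((Q1[fun ω' => (Q2.rnDeriv Q1 ω').toReal | ℱ k]) ω /
     (Q1[fun ω' => (Q2.rnDeriv Q1 ω').toReal | ℱ s]) ω))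

/-- A set of (mutually equivalent) measures is consistent with the filtration if it is
stable under forming the measures `R_s^k`. -/
def ConsistentWithFiltration {Ω : Type*} {m0 : MeasurableSpace Ω} (ℱ : Filtration ℕ m0)
    (M : Set (Measure Ω)) : Prop :=
  ∀ Q1 ∈ M, ∀ Q2 ∈ M, ∀ s k : ℕ, s ≤ k → Rmeas ℱ Q1 Q2 s k ∈ M

theorem stmt4 {Ω : Type*} {m0 : MeasurableSpace Ω} (ℱ : Filtration ℕ m0)
    (M : Set (Measure Ω))
    (hprob : ∀ P ∈ M, IsProbabilityMeasure P)
    (hequiv : ∀ P ∈ M, ∀ Q ∈ M, P ≪ Q)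
    (hcons : ConsistentWithFiltration ℱ M)
    (Q : Measure Ω) (hQ : Q ∈ M) (P : Measure Ω) (hP : P ∈ M)
    (n s k : ℕ) (hns : n ≤ s) (hsk : s ≤ k)
    (ξ : Ω → ℝ) (hmeas : Measurable ξ) (hpos : ∀ ω, 0 ≤ ξ ω)
    (hbdd : ∃ C : ℝ, ∀ P' ∈ M, ∫ ω, ξ ω ∂P' ≤ C) :
    ((Rmeas ℱ Q P s k)[ξ | ℱ n] =ᵐ[Q]
      Q[fun ω => ξ ω * ((Q[fun ω' => (P.rnDeriv Q ω').toReal | ℱ k]) ω /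
          (Q[fun ω' => (P.rnDeriv Q ω').toReal | ℱ s]) ω) | ℱ n]) ∧
    (Q[fun ω => ((Rmeas ℱ Q P s k).rnDeriv Q ω).toReal | ℱ n] =ᵐ[Q]
      fun _ => (1 : ℝ)) := by
  classical
  haveI hQprob : IsProbabilityMeasure Q := hprob Q hQ
  haveI hPprob : IsProbabilityMeasure P := hprob P hP
  have hRM : Rmeas ℱ Q P s k ∈ M := hcons Q hQ P hP s k hsk
  haveI hRprob : IsProbabilityMeasure (Rmeas ℱ Q P s k) := hprob _ hRM
  set f : Ω → ℝ := fun ω' => (P.rnDeriv Q ω').toReal with hf_def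
  set fk : Ω → ℝ := Q[f | ℱ k] with hfk_def
  set fs : Ω → ℝ := Q[f | ℱ s] with hfs_def
  set g : Ω → ℝ := fun ω => fk ω / fs ω with hg_def
  have hR : Rmeas ℱ Q P s k = Q.withDensity (fun ω => ENNReal.ofReal (g ω)) := rfl
  -- measurability
  have hfk_sm : StronglyMeasurable[ℱ k] fk := stronglyMeasurable_condExp
  have hfs_sm : StronglyMeasurable[ℱ s] fs := stronglyMeasurable_condExp
  have hfk_meas : Measurable fk := (hfk_sm.mono (ℱ.le k)).measurable
  have hfs_meas : Measurable fs := (hfs_sm.mono (ℱ.le s)).measurable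
  have hg_meas : Measurable g := hfk_meas.div hfs_meas
  have hdens_meas : Measurable (fun ω => ENNReal.ofReal (g ω)) :=
    ENNReal.measurable_ofReal.comp hg_meas
  -- basic properties of f
  have hf_int : Integrable f Q := Measure.integrable_toReal_rnDeriv
  have hf_nn : ∀ ω, 0 ≤ f ω := fun ω => ENNReal.toReal_nonneg
  have hf_pos : ∀ᵐ ω ∂Q, 0 < f ω := by
    have h1 : ∀ᵐ x ∂P, 0 < P.rnDeriv Q x := Measure.rnDeriv_pos (hequiv P hP Q hQ)
    have h2 : ∀ᵐ x ∂Q, 0 < P.rnDeriv Q x := (hequiv Q hQ P hP).ae_le h1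
    have h3 : ∀ᵐ x ∂Q, P.rnDeriv Q x < ⊤ := Measure.rnDeriv_lt_top P Q
    filter_upwards [h2, h3] with ω hω hlt
    exact ENNReal.toReal_pos hω.ne' hlt.ne
  -- nonnegativity of the conditional expectations
  have hfk_nn : 0 ≤ᵐ[Q] fk := condExp_nonneg (ae_of_all _ hf_nn)
  have hfs_nn : 0 ≤ᵐ[Q] fs := condExp_nonneg (ae_of_all _ hf_nn)
  have hg_nn : 0 ≤ᵐ[Q] g := by
    filter_upwards [hfk_nn, hfs_nn] with ω h1 h2
    exact div_nonneg h1 h2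
  -- a.e. positivity of fs
  have hfs_pos : ∀ᵐ ω ∂Q, 0 < fs ω := by
    set A : Set Ω := {ω | fs ω ≤ 0} with hA_def
    have hA : MeasurableSet[ℱ s] A := hfs_sm.measurable measurableSet_Iic
    have hA0 : MeasurableSet A := ℱ.le s A hA
    have h1 : ∫ ω in A, f ω ∂Q = ∫ ω in A, fs ω ∂Q :=
      (setIntegral_condExp (ℱ.le s) hf_int hA).symm
    have h2 : ∫ ω in A, fs ω ∂Q ≤ 0 := setIntegral_nonpos hA0 fun ω hω => hω
    have h3 : 0 ≤ ∫ ω in A, f ω ∂Q := setIntegral_nonneg hA0 fun ω _ => hf_nn ω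
    have h4 : ∫ ω in A, f ω ∂Q = 0 := le_antisymm (h1 ▸ h2) h3
    have h5 : Q (Function.support f ∩ A) = 0 := by
      by_contra h
      have hpos' : 0 < Q (Function.support f ∩ A) :=
        lt_of_le_of_ne zero_le (Ne.symm h)
      have := (setIntegral_pos_iff_support_of_nonneg_ae
        (ae_restrict_of_ae (ae_of_all _ hf_nn)) hf_int.integrableOn).2 hpos'
      exact absurd h4 (ne_of_gt this)
    have h6 : Q {ω | ¬ 0 < f ω} = 0 := by
      have := hf_pos
      rwa [ae_iff] at this
    have h7 : Q A = 0 := by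
      have hsub : A ⊆ (Function.support f ∩ A) ∪ {ω | ¬ 0 < f ω} := by
        intro ω hω
        by_cases hfω : f ω = 0
        · exact Or.inr (by simp [hfω])
        · exact Or.inl ⟨hfω, hω⟩
      exact measure_mono_null hsub (measure_union_null h5 h6)
    rw [ae_iff]
    convert h7 using 2
    simp [hA_def, not_lt]
  -- the total mass identity
  have hlint : ∫⁻ ω, ENNReal.ofReal (g ω) ∂Q = 1 := by
    have h := (measure_univ : Rmeas ℱ Q P s k Set.univ = 1)
    rwa [hR, withDensity_apply _ MeasurableSet.univ, Measure.restrict_univ] at h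
  -- integrability of g
  have hg_int : Integrable g Q := by
    have h1 : Integrable (fun ω => (ENNReal.ofReal (g ω)).toReal) Q :=
      integrable_toReal_of_lintegral_ne_top hdens_meas.aemeasurable (by rw [hlint]; simp)
    refine h1.congr ?_
    filter_upwards [hg_nn] with ω hω
    exact ENNReal.toReal_ofReal hω
  -- conditional expectation of g given ℱ s is 1
  have hgs : Q[g | ℱ s] =ᵐ[Q] fun _ => (1 : ℝ) := by
    have hu_sm : StronglyMeasurable[ℱ s] (fun ω => (fs ω)⁻¹) :=
      (hfs_sm.measurable.inv).stronglyMeasurable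
    have heq : (fun ω => (fs ω)⁻¹) * fk = g := by
      funext ω
      simp [hg_def, div_eq_inv_mul, Pi.mul_apply]
    have hfg_int : Integrable ((fun ω => (fs ω)⁻¹) * fk) Q := heq ▸ hg_int
    have hpull := condExp_mul_of_stronglyMeasurable_left (μ := Q) (m := ℱ s) hu_sm hfg_int
      (integrable_condExp (m := ℱ k))
    rw [heq] at hpull
    have htower : Q[fk | ℱ s] =ᵐ[Q] fs :=
      condExp_condExp_of_le (ℱ.mono hsk) (ℱ.le k)
    refine hpull.trans ?_
    filter_upwards [htower, hfs_pos] with ω h1 h2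
    simp only [Pi.mul_apply, h1]
    exact inv_mul_cancel₀ h2.ne'
  -- conditional expectation of g given ℱ n is 1
  have hgn : Q[g | ℱ n] =ᵐ[Q] fun _ => (1 : ℝ) := by
    have h1 : Q[Q[g | ℱ s] | ℱ n] =ᵐ[Q] Q[g | ℱ n] :=
      condExp_condExp_of_le (ℱ.mono hns) (ℱ.le s)
    have h2 : Q[Q[g | ℱ s] | ℱ n] =ᵐ[Q] Q[fun _ => (1 : ℝ) | ℱ n] := condExp_congr_ae hgs
    have h3 : Q[fun _ => (1 : ℝ) | ℱ n] = fun _ => (1 : ℝ) := condExp_const (ℱ.le n) 1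
    exact h1.symm.trans (h2.trans (by rw [h3]))
  -- R and Q agree on ℱ n
  have hQA : ∀ A : Set Ω, MeasurableSet[ℱ n] A → Rmeas ℱ Q P s k A = Q A := by
    intro A hA
    have hA0 : MeasurableSet A := ℱ.le n A hA
    rw [hR, withDensity_apply _ hA0]
    have h1 : ∫⁻ ω in A, ENNReal.ofReal (g ω) ∂Q = ENNReal.ofReal (∫ ω in A, g ω ∂Q) :=
      (ofReal_integral_eq_lintegral_ofReal hg_int.integrableOn
        (ae_restrict_of_ae hg_nn)).symm
    have h2 : ∫ ω in A, g ω ∂Q = ∫ ω in A, (1 : ℝ) ∂Q := by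
      rw [← setIntegral_condExp (ℱ.le n) hg_int hA]
      exact setIntegral_congr_ae hA0 (by filter_upwards [hgn] with ω hω _ using hω)
    rw [h1, h2]
    simp [measure_ne_top, ENNReal.ofReal_toReal]
  have htrim : (Rmeas ℱ Q P s k).trim (ℱ.le n) = Q.trim (ℱ.le n) := by
    refine @Measure.ext Ω (ℱ n) _ _ fun A hA => ?_
    rw [trim_measurableSet_eq _ hA, trim_measurableSet_eq _ hA, hQA A hA]
  constructor
  · -- part (i)
    have hiff : Integrable ξ (Rmeas ℱ Q P s k) ↔ Integrable (fun ω => ξ ω * g ω) Q := by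
      rw [hR, integrable_withDensity_iff hdens_meas
        (ae_of_all _ fun ω => ENNReal.ofReal_lt_top)]
      constructor
      · intro h
        refine h.congr ?_
        filter_upwards [hg_nn] with ω hω
        rw [ENNReal.toReal_ofReal hω]
      · intro h
        refine h.congr ?_
        filter_upwards [hg_nn] with ω hω
        rw [ENNReal.toReal_ofReal hω]
    by_cases hint : Integrable ξ (Rmeas ℱ Q P s k)
    · have hint' : Integrable (fun ω => ξ ω * g ω) Q := hiff.mp hint
      set cand : Ω → ℝ := Q[fun ω => ξ ω * g ω | ℱ n] with hcand_def
      have hcand_sm : StronglyMeasurable[ℱ n] cand := stronglyMeasurable_condExp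
      have hcand_int_Q : Integrable cand Q := integrable_condExp
      have hcand_int_R : Integrable cand (Rmeas ℱ Q P s k) := by
        refine integrable_of_integrable_trim (ℱ.le n) ?_
        rw [htrim]
        exact hcand_int_Q.trim (ℱ.le n) hcand_sm
      have key : cand =ᵐ[Rmeas ℱ Q P s k] (Rmeas ℱ Q P s k)[ξ | ℱ n] := by
        refine ae_eq_condExp_of_forall_setIntegral_eq (ℱ.le n) hint
          (fun A hA _ => hcand_int_R.integrableOn)
          (fun A hA _ => ?_) hcand_sm.aestronglyMeasurable
        have hA0 : MeasurableSet A := ℱ.le n A hA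
        have e1 : ∫ ω in A, cand ω ∂(Rmeas ℱ Q P s k) = ∫ ω in A, cand ω ∂Q := by
          rw [setIntegral_trim (ℱ.le n) hcand_sm hA, htrim,
            ← setIntegral_trim (ℱ.le n) hcand_sm hA]
        have e2 : ∫ ω in A, cand ω ∂Q = ∫ ω in A, ξ ω * g ω ∂Q :=
          setIntegral_condExp (ℱ.le n) hint' hA
        have e3 : ∫ ω in A, ξ ω ∂(Rmeas ℱ Q P s k) = ∫ ω in A, ξ ω * g ω ∂Q := by
          have hR' : Rmeas ℱ Q P s k
              = Q.withDensity (fun ω => ((g ω).toNNReal : ℝ≥0∞)) := hR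
          rw [hR', setIntegral_withDensity_eq_setIntegral_smul
            (hg_meas.real_toNNReal) ξ hA0]
          refine setIntegral_congr_ae hA0 ?_
          filter_upwards [hg_nn] with ω hω _
          simp [NNReal.smul_def, Real.coe_toNNReal _ hω, mul_comm]
        rw [e1, e2, e3]
      have hQR : Q ≪ Rmeas ℱ Q P s k := hequiv Q hQ _ hRM
      exact (key.filter_mono hQR.ae_le).symm
    · have h1 : (Rmeas ℱ Q P s k)[ξ | ℱ n] = 0 := condExp_of_not_integrable hint
      have h2 : Q[fun ω => ξ ω * g ω | ℱ n] = 0 :=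
        condExp_of_not_integrable fun h => hint (hiff.mpr h)
      rw [h1]
      exact (by rw [h2] : Q[fun ω => ξ ω * g ω | ℱ n] =ᵐ[Q] (0 : Ω → ℝ)).symm.trans
        (by rw [h2])
  · -- part (ii)
    have hrn : (fun ω => ((Rmeas ℱ Q P s k).rnDeriv Q ω).toReal) =ᵐ[Q] g := by
      have h := Measure.rnDeriv_withDensity Q hdens_meas
      rw [← hR] at h
      filter_upwards [h, hg_nn] with ω hω hgω
      rw [hω, ENNReal.toReal_ofReal hgω]
    exact (condExp_congr_ae hrn).trans hgn
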